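/- Let λ be an infinite cardinal, G a countable graph, and H a graph of size λ. If G_α embeds into H as an induced subgraph for every α < λ⁺, then G embeds into H as an induced subgraph. -/

import Mathlib

open Cardinal Ordinal

/-- The poset `T α`: strictly decreasing finite lists of ordinals `< α`, ordered by
reverse strict-prefix; the empty list is the top element, and the lists starting with `β`
form the copy of `T β`. -/
def TT (α : Ordinal) : Type 1 :=
  {l : List Ordinal // l.Pairwise (· > ·) ∧ ∀ x ∈ l, x < α}

instance instPOTT (α : Ordinal) : PartialOrder (TT α) where
  le u v := v.1 <+: u.1
  le_refl u := List.prefix_refl _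
  le_trans _ _ _ h1 h2 := List.IsPrefix.trans h2 h1
  le_antisymm _ _ h1 h2 :=
    Subtype.ext (List.IsPrefix.eq_of_length h2 ((List.IsPrefix.length_le h2).antisymm (List.IsPrefix.length_le h1)))

/-- The top element of `T α`. -/
def topT (α : Ordinal) : TT α := ⟨[], by simp, by simp⟩

/-- The rank function of the reversed order `⟨T α, >⟩`. -/
def dT {α : Ordinal} (v : TT α) : ℕ := v.1.length

/-- The rank function of `⟨T α, <⟩`; the top element has rank `α`. -/
def rT {α : Ordinal} (v : TT α) : Ordinal := v.1.getLastD α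

/-- The graph `G_α` on `T α`: `u ~ v` iff `u, v` are comparable and `d u ~_G d v`. -/
def Gg (G : SimpleGraph ℕ) (α : Ordinal) : SimpleGraph (TT α) where
  Adj u v := u ≠ v ∧ (u ≤ v ∨ v ≤ u) ∧ G.Adj (dT u) (dT v)
  symm := ⟨fun _ _ h => ⟨Ne.symm h.1, h.2.1.symm, h.2.2.symm⟩⟩
  loopless := ⟨fun _ h => h.1 rfl⟩

/-- The one-way infinite path `P_ω` on `ℕ`. -/
def rayG : SimpleGraph ℕ := SimpleGraph.fromRel (fun m n => n = m + 1)

/-- `A` is a (not necessarily induced) subgraph of `B`. -/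
def SubCopy {X Y : Type*} (A : SimpleGraph X) (B : SimpleGraph Y) : Prop :=
  ∃ f : X ↪ Y, ∀ u v, A.Adj u v → B.Adj (f u) (f v)

/-- `R` is (isomorphic to) the countable random graph: the extension property. -/
def IsRado (R : SimpleGraph ℕ) : Prop :=
  ∀ A B : Finset ℕ, Disjoint A B →
    ∃ v, v ∉ A ∧ v ∉ B ∧ (∀ a ∈ A, R.Adj v a) ∧ (∀ b ∈ B, ¬R.Adj v b)

/-- An `(s, ξ)`-embedding: an induced embedding of some `G_α`, `ξ ≤ α < λ⁺`, into `H`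
whose image contains `s` as the top part of a chain with `d`-values `0, …, n` and whose
last vertex has rank `> ξ`. -/
def IsSXEmb {V : Type} (G : SimpleGraph ℕ) (lam : Cardinal) (H : SimpleGraph V)
    (s : List V) (ξ : Ordinal) : Prop :=
  ∃ α : Ordinal, ξ ≤ α ∧ α < (Order.succ lam).ord ∧
    ∃ (f : Gg G α ↪g H) (t : List (TT α)),
      s = t.map ⇑f ∧
      (∀ i : Fin t.length, dT (t.get i) = i.1) ∧
      (∀ u ∈ t, ∀ v ∈ t, u ≤ v ∨ v ≤ u) ∧
      (∀ v ∈ t.getLast?, ξ < rT v)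

/-- The set `U` of finite sequences admitting `(s, ξ)`-embeddings for all `ξ < λ⁺`. -/
def UU {V : Type} (G : SimpleGraph ℕ) (lam : Cardinal) (H : SimpleGraph V) :
    Set (List V) :=
  {s | ∀ ξ < (Order.succ lam).ord, IsSXEmb G lam H s ξ}


lemma sorted_getLastD_le : ∀ (l : List Ordinal) (d : Ordinal), l.Pairwise (· > ·) →
    ∀ x ∈ l, l.getLastD d ≤ x := by
  intro l
  induction l with
  | nil => intro d _ x hx; cases hx
  | cons a tl ih =>
    intro d hs x hx
    rw [List.getLastD_cons]
    rcases List.mem_cons.1 hx with rfl | hx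
    · rcases tl with _ | ⟨b, tl'⟩
      · simp
      · exact (ih x hs.of_cons _ List.mem_cons_self).trans
          (le_of_lt (List.rel_of_pairwise_cons hs List.mem_cons_self))
    · exact ih a hs.of_cons x hx

lemma getLastD_mem_or (l : List Ordinal) (d : Ordinal) : l.getLastD d = d ∨ l.getLastD d ∈ l := by
  rcases l with _ | ⟨a, tl⟩
  · left; rfl
  · right
    rw [List.getLastD_eq_getLast?, List.getLast?_eq_getLast (by simp), Option.getD_some]
    exact List.getLast_mem _

lemma chain_getElem_prefix {α : Ordinal} (t : List (TT α))
    (hd : ∀ (i : ℕ) (h : i < t.length), dT (t[i]) = i)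
    (hchain : ∀ u ∈ t, ∀ v ∈ t, u ≤ v ∨ v ≤ u)
    (i j : ℕ) (hi : i < t.length) (hj : j < t.length) (hij : i ≤ j) :
    (t[i]).1 <+: (t[j]).1 := by
  rcases hchain t[i] (List.getElem_mem hi) t[j] (List.getElem_mem hj) with h | h
  · have h1 := List.IsPrefix.length_le h
    have h2 := hd i hi; have h3 := hd j hj
    unfold dT at h2 h3
    have : i = j := by omega
    subst this; exact List.prefix_refl _
  · exact h

lemma sxemb_mono {V : Type} {G : SimpleGraph ℕ} {lam : Cardinal} {H : SimpleGraph V}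
    {s : List V} {ξ ξ' : Ordinal} (h : IsSXEmb G lam H s ξ) (hle : ξ' ≤ ξ) :
    IsSXEmb G lam H s ξ' := by
  obtain ⟨α, h1, h2, f, t, h3, h4, h5, h6⟩ := h
  exact ⟨α, hle.trans h1, h2, f, t, h3, h4, h5, fun v hv => hle.trans_lt (h6 v hv)⟩

lemma base_mem {V : Type} {G : SimpleGraph ℕ} {lam : Cardinal} {H : SimpleGraph V}
    (hemb : ∀ α : Ordinal, α < (Order.succ lam).ord → Nonempty (Gg G α ↪g H)) :
    ([] : List V) ∈ UU G lam H := by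
  intro ξ hξ
  obtain ⟨f⟩ := hemb ξ hξ
  exact ⟨ξ, le_refl _, hξ, f, [], by simp, fun i => i.elim0, by simp, by simp⟩


lemma ext_step {V : Type} {G : SimpleGraph ℕ} {lam : Cardinal} {H : SimpleGraph V}
    (hlam : Cardinal.aleph0 ≤ lam) {s : List V} (hs : s ∈ UU G lam H)
    {ξ : Ordinal} (hξ : ξ < (Order.succ lam).ord) :
    ∃ v, IsSXEmb G lam H (s ++ [v]) ξ := by
  have hlim : Order.IsSuccLimit ((Order.succ lam).ord) :=
    Cardinal.isSuccLimit_ord (hlam.trans (le_of_lt (Order.lt_succ lam)))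
  have hξ1 : Order.succ ξ < (Order.succ lam).ord := hlim.succ_lt hξ
  obtain ⟨α, hξα, hα, f, t, hmap, hd, hchain, hlast⟩ := hs (Order.succ ξ) hξ1
  have hξα' : ξ ≤ α := (le_of_lt (Order.lt_succ ξ)).trans hξα
  rcases List.eq_nil_or_concat t with rfl | ⟨t₀, w, rfl⟩
  · refine ⟨f (topT α), α, hξα', hα, f, [topT α], ?_, ?_, ?_, ?_⟩
    · simp at hmap; simp [hmap]
    · intro i
      rcases i with ⟨i, hi⟩
      simp only [List.length_singleton] at hi
      interval_cases i
      rfl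
    · intro u hu v hv; simp at hu hv; subst hu; subst hv; exact Or.inl (le_refl _)
    · intro v hv
      simp [List.getLast?] at hv
      subst hv
      exact lt_of_lt_of_le (Order.lt_succ ξ) hξα
  · simp only [List.concat_eq_append] at hmap hd hchain hlast
    have hw : Order.succ ξ < rT w := hlast w (by simp [List.getLast?_concat])
    have hwle : ∀ x ∈ w.1, Order.succ ξ < x := fun x hx =>
      hw.trans_le (sorted_getLastD_le w.1 α w.2.1 x hx)
    have hrtα : rT w ≤ α := by
      rcases getLastD_mem_or w.1 α with h | h
      · exact le_of_eq h
      · exact le_of_lt (w.2.2 _ h)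
    have hsortu : (w.1 ++ [Order.succ ξ]).Pairwise (· > ·) :=
      List.pairwise_append.2 ⟨w.2.1, List.pairwise_singleton _ _,
        fun a ha b hb => by rw [List.mem_singleton] at hb; subst hb; exact hwle a ha⟩
    have hboundu : ∀ x ∈ w.1 ++ [Order.succ ξ], x < α := by
      intro x hx
      rcases List.mem_append.1 hx with h | h
      · exact w.2.2 x h
      · rw [List.mem_singleton] at h; subst h; exact lt_of_lt_of_le hw hrtα
    set u : TT α := ⟨w.1 ++ [Order.succ ξ], hsortu, hboundu⟩ with hu
    have hd' : ∀ (i : ℕ) (h : i < (t₀ ++ [w]).length), dT ((t₀ ++ [w])[i]) = i := by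
      intro i h
      have h2 := hd ⟨i, by simpa using h⟩
      simpa using h2
    have hdw : dT w = t₀.length := by
      have h := hd' t₀.length (by simp)
      rwa [List.getElem_concat_length rfl] at h
    have hprefix : ∀ x ∈ t₀ ++ [w], x.1 <+: u.1 := by
      intro x hx
      obtain ⟨i, hi, hix⟩ := List.getElem_of_mem hx
      have h1 := chain_getElem_prefix _ hd' hchain i t₀.length hi (by simp)
        (by simp at hi; omega)
      simp only [List.getElem_concat_length rfl] at h1
      rw [hix] at h1
      exact h1.trans (List.prefix_append _ _)
    refine ⟨f u, α, hξα', hα, f, (t₀ ++ [w]) ++ [u], ?_, ?_, ?_, ?_⟩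
    · simp [hmap]
    · intro i
      rcases i with ⟨i, hi⟩
      simp only [List.length_append, List.length_singleton] at hi
      simp only [List.get_eq_getElem]
      rcases Nat.lt_or_ge i (t₀.length + 1) with h | h
      · rw [List.getElem_append_left (by simpa using h)]
        exact hd' i (by simpa using h)
      · have hieq : i = t₀.length + 1 := by omega
        rw [List.getElem_concat_length (by simp; omega)]
        show dT u = i
        have h3 : dT u = w.1.length + 1 := by simp [dT, hu]
        unfold dT at hdw
        omega
    · intro x hx y hy
      rcases List.mem_append.1 hx with hx' | hx' <;> rcases List.mem_append.1 hy with hy' | hy'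
      · exact hchain x hx' y hy'
      · rw [List.mem_singleton] at hy'; subst hy'; exact Or.inr (hprefix x hx')
      · rw [List.mem_singleton] at hx'; subst hx'; exact Or.inl (hprefix y hy')
      · rw [List.mem_singleton] at hx' hy'; subst hx'; subst hy'; exact Or.inl (le_refl _)
    · intro v hv
      rw [List.getLast?_concat, Option.mem_some_iff] at hv
      subst hv
      show ξ < rT u
      have : rT u = Order.succ ξ := by simp [rT, hu, List.getLastD_concat]
      rw [this]
      exact Order.lt_succ ξ

lemma pigeon_step {V : Type} {G : SimpleGraph ℕ} {lam : Cardinal} {H : SimpleGraph V}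
    (hlam : Cardinal.aleph0 ≤ lam) (hV : Cardinal.mk V = lam)
    {s : List V} (hs : s ∈ UU G lam H) : ∃ v, s ++ [v] ∈ UU G lam H := by
  by_contra hcon
  push_neg at hcon
  have hch : ∀ v : V, ∃ ξ, ξ < (Order.succ lam).ord ∧ ¬ IsSXEmb G lam H (s ++ [v]) ξ := by
    intro v
    have := hcon v
    simp only [UU, Set.mem_setOf_eq, not_forall] at this
    obtain ⟨ξ, hξ, hbad⟩ := this
    exact ⟨ξ, hξ, hbad⟩
  choose ξv hξv hbad using hch
  have hreg : (Order.succ lam).IsRegular := Cardinal.isRegular_succ hlam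
  have hsup : (⨆ v, ξv v) < (Order.succ lam).ord :=
    Cardinal.iSup_lt_ord_of_isRegular hreg (by rw [hV]; exact Order.lt_succ lam) hξv
  obtain ⟨v, hv⟩ := ext_step hlam hs hsup
  exact hbad v (sxemb_mono hv (Ordinal.le_iSup ξv v))

theorem stmt7 {V : Type} (lam : Cardinal) (hlam : Cardinal.aleph0 ≤ lam)
    (G : SimpleGraph ℕ) (H : SimpleGraph V) (hV : Cardinal.mk V = lam)
    (hemb : ∀ α : Ordinal, α < (Order.succ lam).ord → Nonempty (Gg G α ↪g H)) :
    Nonempty (G ↪g H) := by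
  classical
  have base : ([] : List V) ∈ UU G lam H := base_mem hemb
  have step : ∀ s, s ∈ UU G lam H → ∃ v, s ++ [v] ∈ UU G lam H :=
    fun s hs => pigeon_step hlam hV hs
  let L : ℕ → {s : List V // s ∈ UU G lam H} := fun n =>
    Nat.rec ⟨[], base⟩
      (fun _ p => ⟨p.1 ++ [Classical.choose (step p.1 p.2)],
        Classical.choose_spec (step p.1 p.2)⟩) n
  have hLsucc : ∀ n, (L (n+1)).1 = (L n).1 ++ [Classical.choose (step (L n).1 (L n).2)] :=
    fun n => rfl
  have hlen : ∀ n, (L n).1.length = n := by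
    intro n
    induction n with
    | zero => rfl
    | succ n ih => rw [hLsucc]; simp [ih]
  have hpre : ∀ m n, m ≤ n → (L m).1 <+: (L n).1 := by
    intro m n h
    induction n with
    | zero =>
      have : m = 0 := Nat.le_zero.1 h
      subst this; exact List.prefix_refl _
    | succ n ih =>
      rcases Nat.lt_or_ge m (n+1) with h' | h'
      · exact (ih (by omega)).trans (by rw [hLsucc]; exact List.prefix_append _ _)
      · have : m = n + 1 := by omega
        subst this; exact List.prefix_refl _
  have hglt : ∀ n : ℕ, n < (L (n+1)).1.length := fun n =>
    lt_of_lt_of_eq (Nat.lt_succ_self n) (hlen (n+1)).symm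
  let g : ℕ → V := fun n => (L (n+1)).1[n]'(hglt n)
  have hg : ∀ (n m : ℕ) (h : n < m), (L m).1[n]'(lt_of_lt_of_eq h (hlen m).symm) = g n := by
    intro n m h
    exact (List.IsPrefix.getElem (hpre (n+1) m h) (hglt n)).symm
  have hord0 : (0 : Ordinal) < (Order.succ lam).ord := by
    have h1 : (0 : Cardinal) < Order.succ lam :=
      lt_of_le_of_lt zero_le (Order.lt_succ lam)
    have := Cardinal.ord_lt_ord.2 h1
    rwa [Cardinal.ord_zero] at this
  have key : ∀ i j : ℕ, (H.Adj (g i) (g j) ↔ G.Adj i j) ∧ (g i = g j → i = j) := by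
    intro i j
    set m := max i j + 1 with hm
    obtain ⟨α, -, -, f, t, hmap, hd, hchain, -⟩ := (L m).2 0 hord0
    have hd' : ∀ (k : ℕ) (h : k < t.length), dT (t[k]) = k := fun k h => by
      simpa using hd ⟨k, h⟩
    have htlen : t.length = m := by
      have h1 := hlen m
      rw [hmap] at h1
      simpa using h1
    have hi : i < t.length := by rw [htlen]; omega
    have hj : j < t.length := by rw [htlen]; omega
    have hgi : g i = f (t[i]'hi) := by
      rw [← hg i m (by omega), List.getElem_of_eq hmap, List.getElem_map]
    have hgj : g j = f (t[j]'hj) := by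
      rw [← hg j m (by omega), List.getElem_of_eq hmap, List.getElem_map]
    have hne : t[i]'hi = t[j]'hj → i = j := by
      intro he
      have h1 := hd' i hi
      have h2 := hd' j hj
      rw [he] at h1
      omega
    constructor
    · rw [hgi, hgj, f.map_adj_iff]
      show (t[i]'hi ≠ t[j]'hj ∧ _ ∧ G.Adj (dT (t[i]'hi)) (dT (t[j]'hj))) ↔ G.Adj i j
      rw [hd' i hi, hd' j hj]
      constructor
      · exact fun h => h.2.2
      · intro h
        refine ⟨fun he => G.irrefl (hne he ▸ h), ?_, h⟩
        exact hchain _ (List.getElem_mem hi) _ (List.getElem_mem hj)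
    · intro he
      rw [hgi, hgj] at he
      exact hne (f.injective he)
  exact ⟨⟨⟨g, fun a b hab => (key a b).2 hab⟩, fun {a b} => (key a b).1⟩⟩
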